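/- Let X be a real Banach space and let Y ⊂ X be a separable infinite-dimensional operator range. Then there is an injective bounded linear operator T : ℓ₁ → X of norm one with T(ℓ₁) ⊂ Y such that the set {T(eₙ)/‖T(eₙ)‖ : n ∈ ℕ} is dense in the unit sphere S_Y = {y ∈ Y : ‖y‖ = 1} of Y. -/

import Mathlib

noncomputable section
open NormedSpace

/-- A subspace is an operator range if it is the image of an injective bounded linear
operator from an infinite-dimensional Banach space. -/
def IsOperatorRange {X : Type*} [NormedAddCommGroup X] [NormedSpace ℝ X]
    (Y : Submodule ℝ X) : Prop :=
  ∃ (E : Type) (_ : NormedAddCommGroup E) (_ : NormedSpace ℝ E),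
    CompleteSpace E ∧ ¬ FiniteDimensional ℝ E ∧
      ∃ T : E →L[ℝ] X, Function.Injective T ∧ Set.range T = (Y : Set X)

/-- The space `ℓ₁` of absolutely summable real sequences. -/
abbrev ellOne : Type := lp (fun _ : ℕ => ℝ) 1

namespace DenseSinglesAux

/-- Generic dependent recursion with choice. -/
noncomputable def depRec {σ : Type*} [Nonempty σ] (F : ℕ → (ℕ → σ) → σ) (m : ℕ) : σ :=
  F m (fun k => if h : k < m then depRec F k else Classical.arbitrary σ)
termination_by m

theorem exists_seq {σ : Type*} [Nonempty σ] (P : ℕ → (ℕ → σ) → σ → Prop)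
    (hmono : ∀ m (f g : ℕ → σ), (∀ k, k < m → f k = g k) → ∀ s, P m f s → P m g s)
    (hex : ∀ m (f : ℕ → σ), ∃ s, P m f s) :
    ∃ f : ℕ → σ, ∀ m, P m f (f m) := by
  set F : ℕ → (ℕ → σ) → σ := fun m f => Classical.choose (hex m f) with hF
  refine ⟨depRec F, fun m => ?_⟩
  rw [depRec]
  exact hmono m _ _ (fun k hk => by simp [hk]) _ (Classical.choose_spec (hex m _))

variable {X : Type*} [NormedAddCommGroup X] [NormedSpace ℝ X]

theorem exists_perturb (Y : Submodule ℝ X) (hYinf : ¬ FiniteDimensional ℝ Y)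
    (F : Submodule ℝ X) (hF : FiniteDimensional ℝ F) {y : X} (hy : y ∈ Y) (hy1 : ‖y‖ = 1)
    {ε : ℝ} (hε : 0 < ε) :
    ∃ v, v ∈ Y ∧ ‖v‖ = 1 ∧ ‖v - y‖ ≤ ε ∧ v ∉ F := by
  classical
  set F' : Submodule ℝ X := F ⊔ Submodule.span ℝ {y} with hF'
  haveI : FiniteDimensional ℝ F' := by
    apply Submodule.finiteDimensional_sup
  -- find u ∈ Y, u ∉ F'
  have hu : ∃ u, u ∈ Y ∧ u ∉ F' := by
    by_contra h
    push_neg at h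
    have hle : Y ≤ F' := fun u hu => h u hu
    exact hYinf (Submodule.finiteDimensional_of_le hle)
  obtain ⟨u, huY, huF⟩ := hu
  have hu0 : u ≠ 0 := fun h => huF (h ▸ F'.zero_mem)
  set u' : X := ‖u‖⁻¹ • u with hu'
  have hu'Y : u' ∈ Y := Y.smul_mem _ huY
  have hu'F : u' ∉ F' := by
    intro h
    apply huF
    have : u = ‖u‖ • u' := by
      rw [hu', smul_smul, mul_inv_cancel₀ (norm_ne_zero_iff.2 hu0), one_smul]
    rw [this]; exact F'.smul_mem _ h
  have hu'1 : ‖u'‖ = 1 := norm_smul_inv_norm hu0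
  set t : ℝ := min (ε / 2) (1 / 2) with ht
  have ht0 : 0 < t := lt_min (by linarith) (by norm_num)
  have ht1 : t ≤ 1 / 2 := min_le_right _ _
  have htε : t ≤ ε / 2 := min_le_left _ _
  set w : X := y + t • u' with hw
  have hwY : w ∈ Y := Y.add_mem hy (Y.smul_mem _ hu'Y)
  have hwy : ‖w - y‖ = t := by
    simp [hw, norm_smul, hu'1, abs_of_pos ht0]
  have hwnorm : (1 : ℝ) - t ≤ ‖w‖ := by
    have h := norm_sub_norm_le y (y - w)
    rw [sub_sub_cancel] at h
    rw [norm_sub_rev y w, hwy, hy1] at h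
    linarith
  have hwpos : 0 < ‖w‖ := by linarith
  have hw0 : w ≠ 0 := norm_pos_iff.mp hwpos
  refine ⟨‖w‖⁻¹ • w, Y.smul_mem _ hwY, norm_smul_inv_norm hw0, ?_, ?_⟩
  · have h1 : ‖(‖w‖⁻¹ • w) - w‖ = |1 - ‖w‖| := by
      have heq : (‖w‖⁻¹ • w) - w = (‖w‖⁻¹ - 1) • w := by rw [sub_smul, one_smul]
      have hprod : (‖w‖⁻¹ - 1) * ‖w‖ = 1 - ‖w‖ := by
        rw [sub_mul, inv_mul_cancel₀ hwpos.ne', one_mul]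
      rw [heq, norm_smul, Real.norm_eq_abs, ← hprod, abs_mul, abs_of_pos hwpos]
    have h2 : |1 - ‖w‖| ≤ t := by
      have : |‖w‖ - ‖y‖| ≤ ‖w - y‖ := abs_norm_sub_norm_le w y
      rw [hwy, hy1] at this
      rw [abs_sub_comm]; exact this
    calc ‖(‖w‖⁻¹ • w) - y‖ ≤ ‖(‖w‖⁻¹ • w) - w‖ + ‖w - y‖ := norm_sub_le_norm_sub_add_norm_sub _ _ _
      _ ≤ t + t := by rw [h1, hwy]; linarith
      _ ≤ ε := by linarith
  · intro hvF
    have hwF : w ∈ F' := by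
      have : w = ‖w‖ • (‖w‖⁻¹ • w) := by
        rw [smul_smul, mul_inv_cancel₀ (norm_ne_zero_iff.2 hw0), one_smul]
      rw [this]
      exact F'.smul_mem _ (le_sup_left (a := F) (b := Submodule.span ℝ {y}) hvF)
    apply hu'F
    have hyF' : y ∈ F' := le_sup_right (a := F) (b := Submodule.span ℝ {y})
      (Submodule.mem_span_singleton_self y)
    have : t • u' ∈ F' := by
      have : t • u' = w - y := by rw [hw]; abel
      rw [this]; exact F'.sub_mem hwF hyF'
    have := F'.smul_mem t⁻¹ this
    rwa [smul_smul, inv_mul_cancel₀ ht0.ne', one_smul] at this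

theorem exists_functional (F : Submodule ℝ X) (hF : FiniteDimensional ℝ F) {v : X}
    (hv : v ∉ F) : ∃ g : X →L[ℝ] ℝ, g v = 1 ∧ ∀ u ∈ F, g u = 0 := by
  obtain ⟨f, u, hfv, hfF⟩ := geometric_hahn_banach_point_closed (F.convex)
    (F.closed_of_finiteDimensional) hv
  have hu0 : u < 0 := by simpa using hfF 0 F.zero_mem
  have hF0 : ∀ a ∈ F, f a = 0 := by
    intro a ha
    by_contra h
    have := hfF (((u - 1) / f a) • a) (F.smul_mem _ ha)
    rw [map_smul, smul_eq_mul, div_mul_cancel₀ _ h] at this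
    linarith
  have hfv0 : f v ≠ 0 := by
    intro h; rw [h] at hfv; linarith
  refine ⟨(f v)⁻¹ • f, ?_, ?_⟩
  · simp [inv_mul_cancel₀ hfv0]
  · intro a ha; simp [hF0 a ha]

theorem ell1_summable (a : ellOne) : Summable fun n => ‖a n‖ := by
  have := (lp.memℓp a).summable (p := 1) (by norm_num)
  simpa using this

theorem ell1_norm (a : ellOne) : ‖a‖ = ∑' n, ‖a n‖ := by
  rw [lp.norm_eq_tsum_rpow (by norm_num) a]
  simp [Real.rpow_one]

variable {W : Type*} [NormedAddCommGroup W] [NormedSpace ℝ W] [CompleteSpace W]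

theorem summable_smul_of_bdd (w : ℕ → W) (hw : ∀ n, ‖w n‖ ≤ 1) (a : ellOne) :
    Summable fun n => a n • w n := by
  apply Summable.of_norm
  apply Summable.of_nonneg_of_le (fun n => norm_nonneg _) (fun n => ?_) (ell1_summable a)
  rw [norm_smul]
  calc ‖a n‖ * ‖w n‖ ≤ ‖a n‖ * 1 := by
        apply mul_le_mul_of_nonneg_left (hw n) (norm_nonneg _)
    _ = ‖a n‖ := mul_one _

theorem exists_op (w : ℕ → W) (hw : ∀ n, ‖w n‖ ≤ 1) :
    ∃ S : ellOne →L[ℝ] W, (∀ a : ellOne, S a = ∑' n, a n • w n) ∧ ‖S‖ ≤ 1 := by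
  have hsum := summable_smul_of_bdd w hw
  have hnormsum : ∀ a : ellOne, Summable fun n => ‖a n • w n‖ := by
    intro a
    apply Summable.of_nonneg_of_le (fun n => norm_nonneg _) (fun n => ?_) (ell1_summable a)
    rw [norm_smul]
    calc ‖a n‖ * ‖w n‖ ≤ ‖a n‖ * 1 := by
          apply mul_le_mul_of_nonneg_left (hw n) (norm_nonneg _)
      _ = ‖a n‖ := mul_one _
  have hbound : ∀ a : ellOne, ‖∑' n, a n • w n‖ ≤ 1 * ‖a‖ := by
    intro a
    rw [one_mul, ell1_norm]
    calc ‖∑' n, a n • w n‖ ≤ ∑' n, ‖a n • w n‖ := norm_tsum_le_tsum_norm (hnormsum a)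
      _ ≤ ∑' n, ‖a n‖ := by
          apply Summable.tsum_le_tsum (fun n => ?_) (hnormsum a) (ell1_summable a)
          rw [norm_smul]
          calc ‖a n‖ * ‖w n‖ ≤ ‖a n‖ * 1 := by
                apply mul_le_mul_of_nonneg_left (hw n) (norm_nonneg _)
            _ = ‖a n‖ := mul_one _
  refine ⟨LinearMap.mkContinuous
    { toFun := fun a => ∑' n, a n • w n
      map_add' := fun a b => ?_
      map_smul' := fun c a => ?_ } 1 hbound, fun a => rfl, ?_⟩
  · show (∑' n, ((a + b : ellOne) n) • w n) = (∑' n, a n • w n) + ∑' n, b n • w n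
    have h : ∀ n, ((a + b : ellOne) n) • w n = a n • w n + b n • w n := by
      intro n
      rw [lp.coeFn_add, Pi.add_apply, add_smul]
    rw [tsum_congr h, Summable.tsum_add (hsum a) (hsum b)]
  · show (∑' n, ((c • a : ellOne) n) • w n) = c • ∑' n, a n • w n
    have h : ∀ n, ((c • a : ellOne) n) • w n = c • (a n • w n) := by
      intro n
      rw [lp.coeFn_smul, Pi.smul_apply, smul_assoc]
    rw [tsum_congr h]
    exact ((hsum a).hasSum.const_smul c).tsum_eq
  · exact LinearMap.mkContinuous_norm_le _ one_pos.le _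

theorem op_single (S : ellOne →L[ℝ] W) (w : ℕ → W)
    (hS : ∀ a : ellOne, S a = ∑' n, a n • w n) (n : ℕ) :
    S (lp.single 1 n (1 : ℝ)) = w n := by
  rw [hS]
  rw [tsum_eq_single n (fun m hm => ?_)]
  · rw [lp.single_apply_self, one_smul]
  · rw [lp.single_apply_ne 1 n _ hm, zero_smul]

end DenseSinglesAux


theorem dense_normalized_singles_in_operator_range
    (X : Type*) [NormedAddCommGroup X] [NormedSpace ℝ X] [CompleteSpace X]
    (Y : Submodule ℝ X) (hY : IsOperatorRange Y)
    (hsep : TopologicalSpace.IsSeparable (Y : Set X)) :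
    ∃ T : ellOne →L[ℝ] X, Function.Injective T ∧ ‖T‖ = 1 ∧
      Set.range T ⊆ (Y : Set X) ∧
      {y : X | y ∈ Y ∧ ‖y‖ = 1} ⊆
        closure (Set.range fun n : ℕ =>
          ‖T (lp.single 1 n (1 : ℝ))‖⁻¹ • T (lp.single 1 n (1 : ℝ))) := by
  classical
  open DenseSinglesAux in
  obtain ⟨E, _, _, hEcomp, hEinf, R, hRinj, hRrange⟩ := hY
  -- Y is infinite dimensional
  have hrange : LinearMap.range (R : E →ₗ[ℝ] X) = Y := by
    apply SetLike.coe_injective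
    rw [LinearMap.coe_range]
    exact hRrange
  have hYinf : ¬ FiniteDimensional ℝ Y := by
    intro h
    apply hEinf
    have e := LinearEquiv.ofInjective (R : E →ₗ[ℝ] X) hRinj
    rw [hrange] at e
    exact e.symm.finiteDimensional
  -- the unit sphere of Y is nonempty
  have hex0 : ∃ y₀ : X, y₀ ∈ Y ∧ ‖y₀‖ = 1 := by
    have hle : ¬ (Y ≤ (⊥ : Submodule ℝ X)) := fun hle =>
      hYinf (Submodule.finiteDimensional_of_le hle)
    obtain ⟨u, huY, hu0⟩ := SetLike.not_le_iff_exists.mp hle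
    have hu0' : u ≠ 0 := fun h => hu0 (by simp [h])
    exact ⟨‖u‖⁻¹ • u, Y.smul_mem _ huY, norm_smul_inv_norm hu0'⟩
  obtain ⟨y₀, hy₀Y, hy₀1⟩ := hex0
  -- a dense sequence in the unit sphere of Y, approximating at arbitrarily large indices
  have hSYsep : TopologicalSpace.IsSeparable {y : X | y ∈ Y ∧ ‖y‖ = 1} :=
    hsep.mono (fun z hz => hz.1)
  haveI := hSYsep.separableSpace
  haveI : Nonempty ↥{y : X | y ∈ Y ∧ ‖y‖ = 1} := ⟨⟨y₀, hy₀Y, hy₀1⟩⟩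
  set d0 : ℕ → ↥{y : X | y ∈ Y ∧ ‖y‖ = 1} :=
    TopologicalSpace.denseSeq ↥{y : X | y ∈ Y ∧ ‖y‖ = 1} with hd0def
  have hd0 : DenseRange d0 := TopologicalSpace.denseRange_denseSeq _
  set yseq : ℕ → X := fun n => (d0 (Nat.unpair n).1 : X) with hyseqdef
  have hyseq_mem : ∀ n, yseq n ∈ Y ∧ ‖yseq n‖ = 1 := fun n => (d0 (Nat.unpair n).1).2
  have hyseq_dense : ∀ z, z ∈ Y → ‖z‖ = 1 → ∀ ε : ℝ, 0 < ε → ∀ N : ℕ,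
      ∃ n, N ≤ n ∧ ‖yseq n - z‖ < ε := by
    intro z hzY hz1 ε hε N
    have hmem : (⟨z, hzY, hz1⟩ : ↥{y : X | y ∈ Y ∧ ‖y‖ = 1}) ∈ closure (Set.range d0) :=
      hd0 _
    rw [Metric.mem_closure_iff] at hmem
    obtain ⟨w, hwmem, hwd⟩ := hmem ε hε
    obtain ⟨j, rfl⟩ := hwmem
    refine ⟨Nat.pair j N, Nat.right_le_pair _ _, ?_⟩
    have h1 : yseq (Nat.pair j N) = (d0 j : X) := by simp [hyseqdef, Nat.unpair_pair]
    rw [h1]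
    rw [Subtype.dist_eq, dist_eq_norm] at hwd
    rwa [norm_sub_rev]
  -- the inductive construction
  haveI : Nonempty (X × E × (X →L[ℝ] ℝ) × ℝ) := ⟨(0, 0, 0, 1)⟩
  have hmono : ∀ (m : ℕ) (f g : ℕ → X × E × (X →L[ℝ] ℝ) × ℝ),
      (∀ k, k < m → f k = g k) → ∀ s : X × E × (X →L[ℝ] ℝ) × ℝ,
      ((s.1 ∈ Y ∧ ‖s.1‖ = 1 ∧ ‖s.1 - yseq m‖ ≤ (2⁻¹ : ℝ) ^ m) ∧
        R s.2.1 = s.1 ∧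
        (s.2.2.1 s.1 = 1 ∧ ∀ k, k < m → s.2.2.1 (f k).1 = 0) ∧
        s.2.2.2 = (2⁻¹ : ℝ) ^ (m+1) /
          (1 + ‖s.2.1‖ + ∑ k ∈ Finset.range m, |((f k).2.2.2)⁻¹| * |(f k).2.2.1 s.1|)) →
      ((s.1 ∈ Y ∧ ‖s.1‖ = 1 ∧ ‖s.1 - yseq m‖ ≤ (2⁻¹ : ℝ) ^ m) ∧
        R s.2.1 = s.1 ∧
        (s.2.2.1 s.1 = 1 ∧ ∀ k, k < m → s.2.2.1 (g k).1 = 0) ∧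
        s.2.2.2 = (2⁻¹ : ℝ) ^ (m+1) /
          (1 + ‖s.2.1‖ + ∑ k ∈ Finset.range m, |((g k).2.2.2)⁻¹| * |(g k).2.2.1 s.1|)) := by
    intro m f g hfg s hs
    refine ⟨hs.1, hs.2.1, ⟨hs.2.2.1.1, fun k hk => by rw [← hfg k hk]; exact hs.2.2.1.2 k hk⟩, ?_⟩
    rw [hs.2.2.2]
    congr 1
    congr 1
    apply Finset.sum_congr rfl
    intro k hk
    rw [hfg k (Finset.mem_range.1 hk)]
  have hex : ∀ (m : ℕ) (prev : ℕ → X × E × (X →L[ℝ] ℝ) × ℝ),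
      ∃ s : X × E × (X →L[ℝ] ℝ) × ℝ,
      ((s.1 ∈ Y ∧ ‖s.1‖ = 1 ∧ ‖s.1 - yseq m‖ ≤ (2⁻¹ : ℝ) ^ m) ∧
        R s.2.1 = s.1 ∧
        (s.2.2.1 s.1 = 1 ∧ ∀ k, k < m → s.2.2.1 (prev k).1 = 0) ∧
        s.2.2.2 = (2⁻¹ : ℝ) ^ (m+1) /
          (1 + ‖s.2.1‖ + ∑ k ∈ Finset.range m, |((prev k).2.2.2)⁻¹| * |(prev k).2.2.1 s.1|)) := by
    intro m prev
    have hfin : FiniteDimensional ℝ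
        (Submodule.span ℝ (Set.range fun k : Fin m => (prev k).1)) :=
      FiniteDimensional.span_of_finite ℝ (Set.finite_range _)
    obtain ⟨v, hvY, hv1, hvclose, hvF⟩ := exists_perturb Y hYinf _ hfin
      (hyseq_mem m).1 (hyseq_mem m).2 (ε := (2⁻¹ : ℝ)^m) (by positivity)
    obtain ⟨g, hg1, hg0⟩ := exists_functional _ hfin hvF
    have hvrange : v ∈ Set.range R := by rw [hRrange]; exact hvY
    obtain ⟨x, hx⟩ := hvrange
    refine ⟨(v, x, g, (2⁻¹ : ℝ) ^ (m+1) /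
      (1 + ‖x‖ + ∑ k ∈ Finset.range m, |((prev k).2.2.2)⁻¹| * |(prev k).2.2.1 v|)),
      ⟨hvY, hv1, hvclose⟩, hx, ⟨hg1, fun k hk => ?_⟩, rfl⟩
    exact hg0 _ (Submodule.subset_span ⟨⟨k, hk⟩, rfl⟩)
  obtain ⟨q, hq⟩ := exists_seq _ hmono hex
  have hvY : ∀ n, (q n).1 ∈ Y := fun n => (hq n).1.1
  have hv1 : ∀ n, ‖(q n).1‖ = 1 := fun n => (hq n).1.2.1
  have hvclose : ∀ n, ‖(q n).1 - yseq n‖ ≤ (2⁻¹ : ℝ)^n := fun n => (hq n).1.2.2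
  have hRx : ∀ n, R (q n).2.1 = (q n).1 := fun n => (hq n).2.1
  have hgv1 : ∀ n, (q n).2.2.1 (q n).1 = 1 := fun n => (hq n).2.2.1.1
  have hgv0 : ∀ n k, k < n → (q n).2.2.1 (q k).1 = 0 := fun n => (hq n).2.2.1.2
  set v : ℕ → X := fun n => (q n).1 with hvdef
  set x : ℕ → E := fun n => (q n).2.1 with hxdef
  set g : ℕ → (X →L[ℝ] ℝ) := fun n => (q n).2.2.1 with hgdef
  set lam : ℕ → ℝ := fun n => (q n).2.2.2 with hlamdef
  set D : ℕ → ℝ := fun m =>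
    1 + ‖x m‖ + ∑ k ∈ Finset.range m, |(lam k)⁻¹| * |g k (v m)| with hDdef
  have hlam_eq : ∀ m, lam m = (2⁻¹ : ℝ)^(m+1) / D m := fun m => (hq m).2.2.2
  have hsum_nonneg : ∀ m, (0:ℝ) ≤ ∑ k ∈ Finset.range m, |(lam k)⁻¹| * |g k (v m)| :=
    fun m => Finset.sum_nonneg fun k _ => mul_nonneg (abs_nonneg _) (abs_nonneg _)
  have hD1 : ∀ m, 1 ≤ D m := by
    intro m
    have h1 := norm_nonneg (x m)
    have h2 := hsum_nonneg m
    rw [hDdef]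
    dsimp only
    linarith
  have hDpos : ∀ m, 0 < D m := fun m => lt_of_lt_of_le one_pos (hD1 m)
  have hlam_pos : ∀ m, 0 < lam m := by
    intro m
    rw [hlam_eq m]
    exact div_pos (by positivity) (hDpos m)
  have hpow_le_one : ∀ m : ℕ, ((2:ℝ)⁻¹)^m ≤ 1 :=
    fun m => pow_le_one₀ (by norm_num) (by norm_num)
  have hlam_le : ∀ m, lam m ≤ (2⁻¹ : ℝ)^(m+1) := by
    intro m
    rw [hlam_eq m]
    exact div_le_self (by positivity) (hD1 m)
  have hlam_le1 : ∀ m, lam m ≤ 1 := fun m => (hlam_le m).trans (hpow_le_one (m+1))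
  have hxD : ∀ m, ‖x m‖ ≤ D m := by
    intro m
    have h2 := hsum_nonneg m
    rw [hDdef]
    dsimp only
    linarith
  have hlam_x : ∀ m, lam m * ‖x m‖ ≤ (2⁻¹ : ℝ)^(m+1) := by
    intro m
    rw [hlam_eq m, div_mul_eq_mul_div, div_le_iff₀ (hDpos m)]
    exact mul_le_mul_of_nonneg_left (hxD m) (by positivity)
  have hkey : ∀ k m, k < m → lam m * |g k (v m)| ≤ (2⁻¹ : ℝ)^(m+1) * lam k := by
    intro k m hkm
    have hterm : |(lam k)⁻¹| * |g k (v m)| ≤ D m := by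
      have h1 : |(lam k)⁻¹| * |g k (v m)| ≤
          ∑ i ∈ Finset.range m, |(lam i)⁻¹| * |g i (v m)| :=
        Finset.single_le_sum (f := fun i => |(lam i)⁻¹| * |g i (v m)|)
          (fun i _ => mul_nonneg (abs_nonneg _) (abs_nonneg _)) (Finset.mem_range.2 hkm)
      have h2 := norm_nonneg (x m)
      rw [hDdef]
      dsimp only
      linarith
    have h2 : |g k (v m)| ≤ D m * lam k := by
      rw [abs_inv, abs_of_pos (hlam_pos k)] at hterm
      have h3 : lam k * ((lam k)⁻¹ * |g k (v m)|) ≤ lam k * D m :=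
        mul_le_mul_of_nonneg_left hterm (hlam_pos k).le
      rw [← mul_assoc, mul_inv_cancel₀ (hlam_pos k).ne', one_mul] at h3
      linarith [h3]
    rw [hlam_eq m]
    calc (2⁻¹ : ℝ)^(m+1) / D m * |g k (v m)|
        ≤ (2⁻¹ : ℝ)^(m+1) / D m * (D m * lam k) :=
          mul_le_mul_of_nonneg_left h2 (by positivity)
      _ = (2⁻¹ : ℝ)^(m+1) * lam k := by
          rw [div_mul_eq_mul_div, mul_div_assoc, mul_div_cancel_left₀ _ (hDpos m).ne']
  -- the operator
  set w : ℕ → E := fun n => lam n • x n with hwdef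
  have hwle : ∀ n, ‖w n‖ ≤ 1 := by
    intro n
    rw [hwdef]
    dsimp only
    rw [norm_smul, Real.norm_eq_abs, abs_of_pos (hlam_pos n)]
    exact (hlam_x n).trans (hpow_le_one (n+1))
  obtain ⟨S, hS, hSle⟩ := exists_op w hwle
  set z : ℕ → X := fun n => lam n • v n with hzdef
  have hz1 : ∀ n, ‖z n‖ = lam n := by
    intro n
    rw [hzdef]
    dsimp only
    rw [norm_smul, Real.norm_eq_abs, abs_of_pos (hlam_pos n), hv1 n, mul_one]
  have hzle : ∀ n, ‖z n‖ ≤ 1 := fun n => (hz1 n).le.trans (hlam_le1 n)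
  have hRw : ∀ n, R (w n) = z n := by
    intro n
    rw [hwdef, hzdef]
    dsimp only
    rw [map_smul, hRx]
  set T0 : ellOne →L[ℝ] X := R.comp S with hT0def
  have hsz : ∀ a : ellOne, Summable fun n => a n • z n := summable_smul_of_bdd z hzle
  have hT0a : ∀ a : ellOne, T0 a = ∑' n, a n • z n := by
    intro a
    show R (S a) = _
    rw [hS a, ContinuousLinearMap.map_tsum R (summable_smul_of_bdd w hwle a)]
    exact tsum_congr fun n => by rw [map_smul, hRw]
  have hT0single : ∀ n, T0 (lp.single 1 n (1:ℝ)) = z n := by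
    intro n
    show R (S _) = _
    rw [op_single S w hS n, hRw]
  have hT0mem : ∀ a, T0 a ∈ Y := by
    intro a
    show R (S a) ∈ Y
    have : R (S a) ∈ Set.range R := ⟨S a, rfl⟩
    rwa [hRrange] at this
  -- injectivity
  have hT0inj : ∀ a : ellOne, T0 a = 0 → a = 0 := by
    intro a ha
    have hcoef : ∀ j, ‖a j‖ ≤ (2⁻¹ : ℝ)^(j+2) * ‖a‖ := by
      intro j
      set c : ℕ → ℝ := fun m => a m * (lam m * g j (v m)) with hcdef
      have hcnorm_bd : ∀ n, ‖c n‖ ≤ ‖g j‖ * ‖a n‖ := by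
        intro n
        rw [hcdef]
        dsimp only
        rw [Real.norm_eq_abs, abs_mul, abs_mul]
        have h1 : |g j (v n)| ≤ ‖g j‖ := by
          have := (g j).le_opNorm (v n)
          rwa [hv1 n, mul_one, Real.norm_eq_abs] at this
        have h2 : |lam n| * |g j (v n)| ≤ 1 * ‖g j‖ :=
          mul_le_mul (by rw [abs_of_pos (hlam_pos n)]; exact hlam_le1 n) h1
            (abs_nonneg _) one_pos.le
        rw [one_mul] at h2
        calc |a n| * (|lam n| * |g j (v n)|) ≤ |a n| * ‖g j‖ :=
              mul_le_mul_of_nonneg_left h2 (abs_nonneg _)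
          _ = ‖g j‖ * ‖a n‖ := by rw [Real.norm_eq_abs, mul_comm]
      have hcnorm : Summable fun n => ‖c n‖ :=
        Summable.of_nonneg_of_le (fun n => norm_nonneg _) hcnorm_bd
          ((ell1_summable a).mul_left ‖g j‖)
      have hcsum : Summable c := hcnorm.of_norm
      have htot : ∑' m, c m = 0 := by
        have h1 : (g j) (T0 a) = 0 := by rw [ha, map_zero]
        rw [hT0a, ContinuousLinearMap.map_tsum (g j) (hsz a)] at h1
        rw [← h1]
        apply tsum_congr
        intro m
        rw [hcdef, hzdef]
        dsimp only
        rw [map_smul, map_smul]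
        simp [mul_comm]
      have hsplit := Summable.tsum_eq_add_tsum_ite hcsum j
      have hcj : c j = -∑' n, (if n = j then 0 else c n) := by
        rw [htot] at hsplit
        linarith [hsplit]
      have hite_bd : ∀ n, ‖(if n = j then 0 else c n)‖ ≤ ((2⁻¹:ℝ)^(j+2) * lam j) * ‖a n‖ := by
        intro n
        by_cases hn : n = j
        · subst hn
          rw [if_pos rfl, norm_zero]
          exact mul_nonneg (mul_nonneg (by positivity) (hlam_pos n).le) (norm_nonneg _)
        · rw [if_neg hn]
          rcases lt_or_gt_of_ne hn with hlt | hgt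
          · -- n < j : g j (v n) = 0
            have : c n = 0 := by
              rw [hcdef]
              dsimp only
              rw [hgv0 j n hlt]
              ring
            rw [this, norm_zero]
            exact mul_nonneg (mul_nonneg (by positivity) (hlam_pos j).le) (norm_nonneg _)
          · -- n > j
            have hkn := hkey j n hgt
            have hpow : (2⁻¹ : ℝ)^(n+1) ≤ (2⁻¹:ℝ)^(j+2) :=
              pow_le_pow_of_le_one (by norm_num) (by norm_num) (by omega)
            rw [hcdef]
            dsimp only
            rw [Real.norm_eq_abs, abs_mul]
            have h1 : |lam n * g j (v n)| ≤ (2⁻¹:ℝ)^(j+2) * lam j := by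
              rw [abs_mul, abs_of_pos (hlam_pos n)]
              calc lam n * |g j (v n)| ≤ (2⁻¹ : ℝ)^(n+1) * lam j := hkn
                _ ≤ (2⁻¹:ℝ)^(j+2) * lam j :=
                    mul_le_mul_of_nonneg_right hpow (hlam_pos j).le
            calc |a n| * |lam n * g j (v n)| ≤ |a n| * ((2⁻¹:ℝ)^(j+2) * lam j) :=
                  mul_le_mul_of_nonneg_left h1 (abs_nonneg _)
              _ = ((2⁻¹:ℝ)^(j+2) * lam j) * ‖a n‖ := by
                  rw [Real.norm_eq_abs, mul_comm]
      have hite_sum : Summable fun n => ‖(if n = j then 0 else c n)‖ := by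
        apply Summable.of_nonneg_of_le (fun n => norm_nonneg _) (fun n => ?_) hcnorm
        by_cases hn : n = j
        · simp [hn]
        · rw [if_neg hn]
      have hbd : ‖c j‖ ≤ ((2⁻¹:ℝ)^(j+2) * lam j) * ‖a‖ := by
        rw [hcj, norm_neg]
        calc ‖∑' n, (if n = j then 0 else c n)‖
            ≤ ∑' n, ‖(if n = j then 0 else c n)‖ := norm_tsum_le_tsum_norm hite_sum
          _ ≤ ∑' n, ((2⁻¹:ℝ)^(j+2) * lam j) * ‖a n‖ :=
              Summable.tsum_le_tsum hite_bd hite_sum (((ell1_summable a)).mul_left _)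
          _ = ((2⁻¹:ℝ)^(j+2) * lam j) * ∑' n, ‖a n‖ := tsum_mul_left
          _ = ((2⁻¹:ℝ)^(j+2) * lam j) * ‖a‖ := by rw [← ell1_norm]
      have hcjval : ‖c j‖ = ‖a j‖ * lam j := by
        rw [hcdef]
        dsimp only
        rw [hgv1 j, mul_one, Real.norm_eq_abs, abs_mul, abs_of_pos (hlam_pos j),
          Real.norm_eq_abs]
      rw [hcjval] at hbd
      have h2 : ‖a j‖ * lam j ≤ ((2⁻¹:ℝ)^(j+2) * ‖a‖) * lam j := by
        calc ‖a j‖ * lam j ≤ ((2⁻¹:ℝ)^(j+2) * lam j) * ‖a‖ := hbd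
          _ = ((2⁻¹:ℝ)^(j+2) * ‖a‖) * lam j := by ring
      exact le_of_mul_le_mul_right h2 (hlam_pos j)
    have hgs : Summable fun j : ℕ => (2⁻¹:ℝ)^(j+2) * ‖a‖ :=
      (((summable_geometric_of_lt_one (r := (2:ℝ)⁻¹) (by norm_num) (by norm_num)).mul_left
        ((2⁻¹:ℝ)^2)).congr (fun j => by rw [← pow_add]; ring_nf)).mul_right ‖a‖
    have hgeo : ∑' j : ℕ, (2⁻¹:ℝ)^(j+2) = 1/2 := by
      have h0 : ∑' j : ℕ, (2⁻¹:ℝ)^j = 2 := by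
        rw [tsum_geometric_of_lt_one (by norm_num) (by norm_num)]
        norm_num
      calc ∑' j : ℕ, (2⁻¹:ℝ)^(j+2) = ∑' j : ℕ, (2⁻¹:ℝ)^2 * (2⁻¹:ℝ)^j := by
            apply tsum_congr; intro j; rw [← pow_add]; ring_nf
        _ = (2⁻¹:ℝ)^2 * ∑' j : ℕ, (2⁻¹:ℝ)^j := tsum_mul_left
        _ = 1/2 := by rw [h0]; norm_num
    have hhalf : ‖a‖ ≤ 1/2 * ‖a‖ := by
      calc ‖a‖ = ∑' j, ‖a j‖ := ell1_norm a
        _ ≤ ∑' j : ℕ, (2⁻¹:ℝ)^(j+2) * ‖a‖ := Summable.tsum_le_tsum hcoef (ell1_summable a) hgs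
        _ = (∑' j : ℕ, (2⁻¹:ℝ)^(j+2)) * ‖a‖ := tsum_mul_right
        _ = 1/2 * ‖a‖ := by rw [hgeo]
    have : ‖a‖ ≤ 0 := by linarith
    exact norm_le_zero_iff.mp this
  -- T0 is nonzero
  have hT0ne : T0 ≠ 0 := by
    intro h
    have h1 := hT0single 0
    rw [h] at h1
    simp only [ContinuousLinearMap.zero_apply] at h1
    have h2 := hz1 0
    rw [← h1] at h2
    simp only [norm_zero] at h2
    exact (hlam_pos 0).ne h2
  have hT0norm : 0 < ‖T0‖ := norm_pos_iff.mpr hT0ne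
  set cN : ℝ := ‖T0‖⁻¹ with hcNdef
  have hcpos : 0 < cN := inv_pos.2 hT0norm
  refine ⟨cN • T0, ?_, ?_, ?_, ?_⟩
  · -- injective
    intro a b hab
    have h1 : T0 a = T0 b := by
      rw [ContinuousLinearMap.smul_apply, ContinuousLinearMap.smul_apply] at hab
      exact smul_right_injective X hcpos.ne' hab
    have h2 := hT0inj (a - b) (by rw [map_sub, h1, sub_self])
    exact sub_eq_zero.mp h2
  · -- norm one
    have hub : ‖cN • T0‖ ≤ cN * ‖T0‖ := by
      have h := ContinuousLinearMap.opNorm_smul_le (𝕜' := ℝ) cN T0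
      rwa [Real.norm_eq_abs, abs_of_pos hcpos] at h
    have h1 : cN * ‖T0‖ = 1 := inv_mul_cancel₀ hT0norm.ne'
    have hlb : ‖T0‖ ≤ ‖T0‖ * ‖cN • T0‖ := by
      have heq : T0 = cN⁻¹ • (cN • T0) := by
        rw [smul_smul, inv_mul_cancel₀ hcpos.ne', one_smul]
      have hcninv : cN⁻¹ = ‖T0‖ := by rw [hcNdef, inv_inv]
      calc ‖T0‖ = ‖cN⁻¹ • (cN • T0)‖ := by rw [← heq]
        _ ≤ ‖cN⁻¹‖ * ‖cN • T0‖ := ContinuousLinearMap.opNorm_smul_le _ _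
        _ = ‖T0‖ * ‖cN • T0‖ := by
            rw [Real.norm_eq_abs, abs_of_pos (inv_pos.2 hcpos), hcninv]
    refine le_antisymm (hub.trans h1.le) ?_
    have h3 : ‖T0‖ * 1 ≤ ‖T0‖ * ‖cN • T0‖ := by rwa [mul_one]
    exact le_of_mul_le_mul_left h3 hT0norm
  · -- range in Y
    rintro _ ⟨a, rfl⟩
    rw [ContinuousLinearMap.smul_apply]
    exact Y.smul_mem _ (hT0mem a)
  · -- density
    intro ζ hζ
    rw [Metric.mem_closure_iff]
    intro ε hε
    obtain ⟨N, hN⟩ := exists_pow_lt_of_lt_one (half_pos hε) (by norm_num : (2⁻¹:ℝ) < 1)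
    obtain ⟨n, hnN, hn⟩ := hyseq_dense ζ hζ.1 hζ.2 (ε/2) (half_pos hε) N
    have hvn : ‖v n - ζ‖ < ε := by
      have hp1 : (2⁻¹:ℝ)^n ≤ (2⁻¹:ℝ)^N :=
        pow_le_pow_of_le_one (by norm_num) (by norm_num) hnN
      calc ‖v n - ζ‖ ≤ ‖v n - yseq n‖ + ‖yseq n - ζ‖ :=
            norm_sub_le_norm_sub_add_norm_sub _ _ _
        _ < (2⁻¹:ℝ)^N + ε/2 := by
            have := hvclose n
            linarith
        _ < ε/2 + ε/2 := by linarith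
        _ = ε := by ring
    refine ⟨v n, ⟨n, ?_⟩, ?_⟩
    · show ‖(cN • T0) (lp.single 1 n (1:ℝ))‖⁻¹ • (cN • T0) (lp.single 1 n (1:ℝ)) = v n
      rw [ContinuousLinearMap.smul_apply, hT0single n]
      have h1 : cN • z n = (cN * lam n) • v n := by
        rw [hzdef]
        dsimp only
        rw [smul_smul]
      rw [h1]
      have hpos : 0 < cN * lam n := mul_pos hcpos (hlam_pos n)
      rw [norm_smul, Real.norm_eq_abs, abs_of_pos hpos, hv1 n, mul_one, smul_smul,
        inv_mul_cancel₀ hpos.ne', one_smul]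
    · rw [dist_eq_norm, norm_sub_rev]
      exact hvn
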